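/- Let K be a field of characteristic zero, M a linear differential operator with polynomial coefficients, H the weak Hermite reduction with respect to M, Exc_M = H(M(K(x))), and ρ the idempotent projection annihilating exactly Exc_M with minimal-degree-numerator normalization. Then the map [·] : K(x) → K(x) defined by [R] = ρ(H(R)) is a canonical form with respect to M: it is K-linear, [M(R)] = 0 for all R, and R − [R] ∈ M(K(x)) for all R. In particular [R] = 0 if and only if R ∈ M(K(x)), and [[R]] = [R]. -/
import Mathlib


open Polynomial

/-- The derivative of a rational function, `(p/q)' = (p'q − pq')/q²`. -/
noncomputable def ratDeriv {K : Type*} [Field K] (f : RatFunc K) : RatFunc K :=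
  (algebraMap K[X] (RatFunc K) (derivative f.num) * algebraMap K[X] (RatFunc K) f.denom -
      algebraMap K[X] (RatFunc K) f.num * algebraMap K[X] (RatFunc K) (derivative f.denom)) /
    algebraMap K[X] (RatFunc K) (f.denom ^ 2)

/-- The action of the differential operator `M = ∑_{i=0}^r pᵢ ∂ⁱ` (with polynomial
coefficients `pᵢ`) on a rational function. -/
noncomputable def applyOp {K : Type*} [Field K] (r : ℕ) (p : ℕ → K[X]) (f : RatFunc K) :
    RatFunc K :=
  ∑ i ∈ Finset.range (r + 1), algebraMap K[X] (RatFunc K) (p i) * ratDeriv^[i] f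

/-- `f` has no pole at `α`. -/
def regAt {K : Type*} [Field K] (α : K) (f : RatFunc K) : Prop :=
  Polynomial.eval α f.denom ≠ 0

/-- `ord_α f ≥ m` : the valuation of `f` at `α` (as a Laurent series in `x − α`)
is at least `m`. -/
def ordGe {K : Type*} [Field K] (α : K) (m : ℤ) (f : RatFunc K) : Prop :=
  regAt α ((RatFunc.X - RatFunc.C α) ^ (-m) * f)

/-- `f` has degree (order at infinity, negated) at most `m`, i.e. `ord_∞ f ≥ −m`. -/
def degLe {K : Type*} [Field K] (m : ℤ) (f : RatFunc K) : Prop :=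
  f = 0 ∨ RatFunc.intDegree f ≤ m

/-- the generalized Hermite reduction `[R] = ρ(H(R))` is a canonical
form with respect to `M`: it annihilates the image of `M`, reduces every `R` modulo
the image of `M`, vanishes exactly on the image of `M`, and is idempotent. -/
theorem generalized_hermite_is_canonical_form {K : Type*} [Field K] [CharZero K]
    (r : ℕ) (p : ℕ → K[X])
    (M H ρ : RatFunc K →ₗ[K] RatFunc K) (hM : ∀ f, M f = applyOp r p f)
    (hH1 : ∀ R : RatFunc K, R - H R ∈ LinearMap.range M)
    (hH2 : ∀ R : RatFunc K, H (H R) = H R)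
    (Exc : Submodule K (RatFunc K))
    (hExc : Exc = Submodule.map H (LinearMap.range M))
    (hExcFin : FiniteDimensional K Exc)
    (hρ1 : ∀ R : RatFunc K, ρ (ρ R) = ρ R)
    (hρ2 : LinearMap.ker ρ = Exc)
    (hρ3 : ∀ R S : RatFunc K, R - S ∈ Exc → (ρ R).num.degree ≤ S.num.degree) :
    (∀ R : RatFunc K, ρ (H (M R)) = 0) ∧
    (∀ R : RatFunc K, R - ρ (H R) ∈ LinearMap.range M) ∧
    (∀ R : RatFunc K, ρ (H R) = 0 ↔ R ∈ LinearMap.range M) ∧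
    (∀ R : RatFunc K, ρ (H (ρ (H R))) = ρ (H R)) := by
  -- basic facts
  have hmemExc : ∀ R : RatFunc K, H (M R) ∈ Exc := by
    intro R
    rw [hExc]
    exact ⟨M R, ⟨R, rfl⟩, rfl⟩
  have hExcSub : ∀ x, x ∈ Exc → x ∈ LinearMap.range M := by
    intro x hx
    rw [hExc] at hx
    obtain ⟨y, ⟨z, rfl⟩, rfl⟩ := hx
    have h1 := hH1 (M z)
    obtain ⟨w, hw⟩ := h1
    exact ⟨z - w, by simp [map_sub, hw]⟩
  have h1 : ∀ R : RatFunc K, ρ (H (M R)) = 0 := fun R =>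
    (LinearMap.mem_ker).1 (hρ2 ▸ hmemExc R)
  have hdiff : ∀ R : RatFunc K, H R - ρ (H R) ∈ Exc := by
    intro R
    rw [← hρ2, LinearMap.mem_ker, map_sub, hρ1, sub_self]
  have h2 : ∀ R : RatFunc K, R - ρ (H R) ∈ LinearMap.range M := by
    intro R
    have := (LinearMap.range M).add_mem (hH1 R) (hExcSub _ (hdiff R))
    simpa [sub_add_sub_cancel] using this
  refine ⟨h1, h2, ?_, ?_⟩
  · intro R
    constructor
    · intro h
      have := h2 R
      rw [h, sub_zero] at this
      exact this
    · rintro ⟨S, rfl⟩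
      exact h1 S
  · intro R
    -- ρ(H R) - H R ∈ Exc ⊆ range M
    obtain ⟨T, hT⟩ := hExcSub _ ((Exc).neg_mem (hdiff R))
    have hS : ρ (H R) = H R + M T := by
      rw [hT]; ring
    rw [hS, map_add, hH2, map_add, h1, add_zero]; exact hS
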